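/- Every connected digraph with loops G (vertex set possibly infinite) that has at least two vertices and at least one unlooped vertex is isomorphic to a weak Cartesian product of prime digraphs: there exist a nonempty index set I, a family (G_ι)_{ι∈I} of prime digraphs, and a vertex a of ∏_{ι∈I} G_ι such that G is isomorphic to the weak Cartesian product ∏^a_{ι∈I} G_ι. -/

import Mathlib

universe u

namespace Digraph

/-- Cartesian product of two digraphs. -/
def boxProd {α β : Type*} (G : Digraph α) (H : Digraph β) : Digraph (α × β) where
  Adj p q := (G.Adj p.1 q.1 ∧ p.2 = q.2) ∨ (p.1 = q.1 ∧ H.Adj p.2 q.2)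

/-- Cartesian product of a family of digraphs. -/
def prodFam {I : Type*} {V : I → Type*} (G : ∀ i, Digraph (V i)) : Digraph (∀ i, V i) where
  Adj u v := ∃ κ, (G κ).Adj (u κ) (v κ) ∧ ∀ i, i ≠ κ → u i = v i

/-- The shadow of a digraph: distinct vertices are adjacent iff there is an arc between them
in some direction. -/
def shadow {α : Type*} (G : Digraph α) : SimpleGraph α where
  Adj a b := a ≠ b ∧ (G.Adj a b ∨ G.Adj b a)
  symm := by
    constructor
    rintro a b ⟨hab, h⟩
    exact ⟨hab.symm, h.symm⟩
  loopless := by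
    constructor
    rintro a ⟨ha, -⟩
    exact ha rfl

/-- A digraph is connected if its shadow is connected. -/
def Connected {α : Type*} (G : Digraph α) : Prop := G.shadow.Connected

/-- Isomorphisms of digraphs. -/
abbrev Iso {α β : Type*} (G : Digraph α) (H : Digraph β) := RelIso G.Adj H.Adj

/-- A digraph is prime w.r.t. the Cartesian product if it is nontrivial, connected, has an
unlooped vertex, and in every representation as a product of two digraphs one factor
has exactly one vertex. -/
def IsPrime {α : Type u} (G : Digraph α) : Prop :=
  G.Connected ∧ Nontrivial α ∧ (∃ v, ¬ G.Adj v v) ∧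
    ∀ {A B : Type u} (GA : Digraph A) (GB : Digraph B),
      Nonempty (G.Iso (GA.boxProd GB)) →
        (Nonempty A ∧ Subsingleton A) ∨ (Nonempty B ∧ Subsingleton B)

/-- The vertex set of the connected component of `a` in the shadow of the product. -/
def weakComponent {I : Type*} {V : I → Type*} (G : ∀ i, Digraph (V i)) (a : ∀ i, V i) :
    Set (∀ i, V i) :=
  {v | (prodFam G).shadow.Reachable a v}

/-- The weak Cartesian product: the induced subdigraph of the Cartesian product on the
connected component (in the shadow) of the vertex `a`. -/
def weakProd {I : Type*} {V : I → Type*} (G : ∀ i, Digraph (V i)) (a : ∀ i, V i) :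
    Digraph (weakComponent G a) where
  Adj u v := (prodFam G).Adj u.1 v.1

end Digraph

namespace WeakFactor

open Digraph

variable {V : Type u}

/-- `u` and `v` agree in every coordinate of `D` other than `R`. -/
def Par (D : Set (Setoid V)) (R : Setoid V) (u v : V) : Prop :=
  ∀ R' ∈ D, R' ≠ R → R'.r u v

/-- A product decomposition structure on a digraph `G`: a family of "same `i`-th coordinate"
equivalence relations. -/
structure IsDecomp (G : Digraph V) (D : Set (Setoid V)) : Prop where
  ne_top : ∀ R ∈ D, R ≠ (⊤ : Setoid V)
  sep : ∀ u v : V, (∀ R ∈ D, R.r u v) → u = v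
  arc : ∀ u v : V, G.Adj u v → u ≠ v → ∃ R ∈ D, Par D R u v
  tfwd : ∀ R ∈ D, ∀ u v w : V, G.Adj u v → u ≠ v → Par D R u v → R.r u w →
    ∃ x, G.Adj w x ∧ R.r v x ∧ Par D R w x
  tbwd : ∀ R ∈ D, ∀ u v w : V, G.Adj u v → u ≠ v → Par D R u v → R.r v w →
    ∃ x, G.Adj x w ∧ R.r u x ∧ Par D R x w
  loopT : ∀ u : V, G.Adj u u → ∃ R ∈ D, ∀ w, R.r u w → G.Adj w w

variable {G : Digraph V}

theorem mkeq {R : Setoid V} {a b : V} : (Quotient.mk R a = Quotient.mk R b) ↔ R.r a b :=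
  ⟨Quotient.exact, Quotient.sound⟩

/-- The factor digraph of a decomposition in coordinate `R`. -/
def fac (G : Digraph V) (D : Set (Setoid V)) (R : Setoid V) : Digraph (Quotient R) where
  Adj c d :=
    (∃ u v, G.Adj u v ∧ u ≠ v ∧ Par D R u v ∧ Quotient.mk R u = c ∧ Quotient.mk R v = d)
    ∨ (c = d ∧ ∃ u, G.Adj u u ∧ Quotient.mk R u = c ∧ ∀ w, R.r u w → G.Adj w w)

attribute [local instance] Classical.propDecidable

theorem par_not {D : Set (Setoid V)} (hD : IsDecomp G D) {R : Setoid V} (hR : R ∈ D)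
    {u v : V} (hp : Par D R u v) (hne : u ≠ v) : ¬ R.r u v := by
  intro h
  exact hne (hD.sep u v (fun R' hR' => by
    by_cases hRR : R' = R
    · exact hRR ▸ h
    · exact hp R' hR' hRR))

theorem coord_uniq {D : Set (Setoid V)} (hD : IsDecomp G D) {u v : V}
    (ha : G.Adj u v) (hne : u ≠ v) {R R' : Setoid V} (hR : R ∈ D) (hnr : ¬ R.r u v)
    (hR' : R' ∈ D) (hnr' : ¬ R'.r u v) : R = R' := by
  obtain ⟨K, hK, hKp⟩ := hD.arc u v ha hne
  have h1 : R = K := by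
    by_contra h
    exact hnr (hKp R hR h)
  have h2 : R' = K := by
    by_contra h
    exact hnr' (hKp R' hR' h)
  rw [h1, h2]

theorem exists_coord {D : Set (Setoid V)} (hD : IsDecomp G D) {u v : V} (hne : u ≠ v) :
    ∃ R ∈ D, ¬ R.r u v := by
  by_contra h
  push_neg at h
  exact hne (hD.sep u v h)

/-- The coordinate of a pair (to be used on arcs). -/
noncomputable def kap (D : Set (Setoid V)) (u v : V) : Setoid V :=
  if h : ∃ R, R ∈ D ∧ ¬ R.r u v then h.choose else ⊥

theorem kap_mem {D : Set (Setoid V)} (hD : IsDecomp G D) {u v : V} (hne : u ≠ v) :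
    kap D u v ∈ D := by
  obtain ⟨R, hR, hr⟩ := exists_coord hD hne
  rw [kap, dif_pos ⟨R, hR, hr⟩]
  exact (Exists.choose_spec (⟨R, hR, hr⟩ : ∃ R, R ∈ D ∧ ¬ R.r u v)).1

theorem kap_not {D : Set (Setoid V)} (hD : IsDecomp G D) {u v : V} (hne : u ≠ v) :
    ¬ (kap D u v).r u v := by
  obtain ⟨R, hR, hr⟩ := exists_coord hD hne
  rw [kap, dif_pos ⟨R, hR, hr⟩]
  exact (Exists.choose_spec (⟨R, hR, hr⟩ : ∃ R, R ∈ D ∧ ¬ R.r u v)).2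

theorem kap_eq {D : Set (Setoid V)} (hD : IsDecomp G D) {u v : V} (ha : G.Adj u v)
    (hne : u ≠ v) {R : Setoid V} (hR : R ∈ D) (hnr : ¬ R.r u v) : kap D u v = R :=
  coord_uniq hD ha hne (kap_mem hD hne) (kap_not hD hne) hR hnr

theorem kap_par {D : Set (Setoid V)} (hD : IsDecomp G D) {u v : V} (ha : G.Adj u v)
    (hne : u ≠ v) : Par D (kap D u v) u v := by
  obtain ⟨K, hK, hKp⟩ := hD.arc u v ha hne
  have : kap D u v = K := by
    refine kap_eq hD ha hne hK (par_not hD hK hKp hne)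
  rw [this]; exact hKp

section Walks

/-- From a walk in the shadow, extract the list of arcs along it. -/
theorem walk_list {p q : V} (w : G.shadow.Walk p q) :
    ∃ L : List (V × V), (∀ e ∈ L, G.Adj e.1 e.2 ∧ e.1 ≠ e.2) ∧
      ∀ R : Setoid V, (∀ e ∈ L, R.r e.1 e.2) → R.r p q := by
  induction w with
  | nil => exact ⟨[], by simp, fun R _ => R.refl _⟩
  | @cons a b c h w ih =>
    obtain ⟨L, hL, hR⟩ := ih
    obtain ⟨hne, harc⟩ := h
    rcases harc with h1 | h1
    · refine ⟨(a, b) :: L, ?_, ?_⟩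
      · rintro e he
        rcases List.mem_cons.1 he with rfl | he
        · exact ⟨h1, hne⟩
        · exact hL e he
      · intro R hr
        exact R.trans (hr (a,b) (List.mem_cons_self)) (hR R (fun e he => hr e (List.mem_cons_of_mem _ he)))
    · refine ⟨(b, a) :: L, ?_, ?_⟩
      · rintro e he
        rcases List.mem_cons.1 he with rfl | he
        · exact ⟨h1, Ne.symm hne⟩
        · exact hL e he
      · intro R hr
        exact R.trans (R.symm (hr (b,a) (List.mem_cons_self))) (hR R (fun e he => hr e (List.mem_cons_of_mem _ he)))

theorem reach_list (hconn : G.Connected) (p q : V) :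
    ∃ L : List (V × V), (∀ e ∈ L, G.Adj e.1 e.2 ∧ e.1 ≠ e.2) ∧
      ∀ R : Setoid V, (∀ e ∈ L, R.r e.1 e.2) → R.r p q := by
  obtain ⟨w⟩ := hconn.preconnected p q
  exact walk_list w

end Walks

section Factors

/-- Shadow walks project to the factors. -/
theorem fac_reach {D : Set (Setoid V)} (hD : IsDecomp G D) {R : Setoid V} (hR : R ∈ D)
    {p q : V} (hr : G.shadow.Reachable p q) :
    (fac G D R).shadow.Reachable (Quotient.mk R p) (Quotient.mk R q) := by
  obtain ⟨w⟩ := hr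
  induction w with
  | nil => exact SimpleGraph.Reachable.refl _
  | @cons a b c h w ih =>
    refine SimpleGraph.Reachable.trans ?_ ih
    obtain ⟨hne, harc⟩ := h
    by_cases hab : Quotient.mk R a = Quotient.mk R b
    · rw [hab]
    · refine SimpleGraph.Adj.reachable ⟨hab, ?_⟩
      rcases harc with h1 | h1
      · left
        refine Or.inl ⟨a, b, h1, hne, ?_, rfl, rfl⟩
        intro R' hR' hRR
        by_contra hr'
        have := coord_uniq hD h1 hne hR (fun hc => hab (Quotient.sound hc)) hR' hr'
        exact hRR this.symm
      · right
        refine Or.inl ⟨b, a, h1, Ne.symm hne, ?_, rfl, rfl⟩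
        intro R' hR' hRR
        by_contra hr'
        have := coord_uniq hD h1 (Ne.symm hne) hR
          (fun hc => hab (Quotient.sound (R.symm hc))) hR' hr'
        exact hRR this.symm

theorem fac_connected (hconn : G.Connected) {D : Set (Setoid V)} (hD : IsDecomp G D)
    {R : Setoid V} (hR : R ∈ D) : (fac G D R).Connected := by
  have hne : Nonempty V := hconn.nonempty
  obtain ⟨v⟩ := hne
  have : Nonempty (Quotient R) := ⟨Quotient.mk R v⟩
  refine SimpleGraph.Connected.mk ?_
  intro c d
  obtain ⟨p, rfl⟩ := Quotient.exists_rep c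
  obtain ⟨q, rfl⟩ := Quotient.exists_rep d
  exact fac_reach hD hR (hconn.preconnected p q)

/-- Lift a walk in a factor: one can change the `R`-coordinate of any vertex arbitrarily,
keeping all other coordinates. -/
theorem fac_lift {D : Set (Setoid V)} (hD : IsDecomp G D) {R : Setoid V} (hR : R ∈ D)
    {c₁ c₂ : Quotient R} (w : (fac G D R).shadow.Walk c₁ c₂) :
    ∀ u : V, Quotient.mk R u = c₁ → ∃ v : V, Quotient.mk R v = c₂ ∧ Par D R u v := by
  induction w with
  | nil => exact fun u hu => ⟨u, hu, fun R' _ _ => R'.refl _⟩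
  | @cons a b c h w ih =>
    intro u hu
    obtain ⟨hne, harc⟩ := h
    have step : ∃ x : V, Quotient.mk R x = b ∧ Par D R u x := by
      rcases harc with h1 | h1
      · rcases h1 with ⟨p, q, hpq, hpqne, hpar, hp, hq⟩ | ⟨heq, _⟩
        · have hru : R.r p u := Quotient.exact (hp.trans hu.symm)
          obtain ⟨x, hx1, hx2, hx3⟩ := hD.tfwd R hR p q u hpq hpqne hpar hru
          exact ⟨x, (Quotient.sound (R.symm hx2)).symm ▸ hq, hx3⟩
        · exact absurd heq hne
      · rcases h1 with ⟨p, q, hpq, hpqne, hpar, hp, hq⟩ | ⟨heq, _⟩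
        · have hru : R.r q u := Quotient.exact (hq.trans hu.symm)
          obtain ⟨x, hx1, hx2, hx3⟩ := hD.tbwd R hR p q u hpq hpqne hpar hru
          refine ⟨x, (Quotient.sound (R.symm hx2)).symm ▸ hp, fun R' h1 h2 => R'.symm (hx3 R' h1 h2)⟩
        · exact absurd heq.symm hne
    obtain ⟨x, hx1, hx2⟩ := step
    obtain ⟨v, hv1, hv2⟩ := ih x hx1
    exact ⟨v, hv1, fun R' h1 h2 => R'.trans (hx2 R' h1 h2) (hv2 R' h1 h2)⟩

theorem move (hconn : G.Connected) {D : Set (Setoid V)} (hD : IsDecomp G D)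
    {R : Setoid V} (hR : R ∈ D) (u : V) (c : Quotient R) :
    ∃ v : V, Quotient.mk R v = c ∧ Par D R u v := by
  obtain ⟨w⟩ := (fac_connected hconn hD hR).preconnected (Quotient.mk R u) c
  exact fac_lift hD hR w u rfl

theorem fac_nontrivial {D : Set (Setoid V)} (hD : IsDecomp G D) {R : Setoid V} (hR : R ∈ D) :
    Nontrivial (Quotient R) := by
  have : ∃ u v, ¬ R.r u v := by
    by_contra h
    push_neg at h
    exact (hD.ne_top R hR) (Setoid.ext fun a b => ⟨fun _ => trivial, fun _ => h a b⟩)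
  obtain ⟨u, v, huv⟩ := this
  exact ⟨Quotient.mk R u, Quotient.mk R v, fun h => huv (Quotient.exact h)⟩

theorem fac_unlooped {D : Set (Setoid V)} (hD : IsDecomp G D) {R : Setoid V} (hR : R ∈ D)
    {v₀ : V} (hv₀ : ¬ G.Adj v₀ v₀) : ¬ (fac G D R).Adj (Quotient.mk R v₀) (Quotient.mk R v₀) := by
  rintro (⟨u, v, huv, hne, hpar, hu, hv⟩ | ⟨-, u, hu, huc, htr⟩)
  · have : R.r u v := R.trans (Quotient.exact hu) (R.symm (Quotient.exact hv))
    exact par_not hD hR hpar hne this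
  · exact hv₀ (htr v₀ (Quotient.exact huc))

end Factors

section Iso

/-- The coordinatization map. -/
def Phi (D : Set (Setoid V)) (v : V) : ∀ i : ↥D, Quotient i.1 := fun i => Quotient.mk i.1 v

/-- The family of factors. -/
def Fs (G : Digraph V) (D : Set (Setoid V)) : ∀ i : ↥D, Digraph (Quotient i.1) :=
  fun i => fac G D i.1

theorem sub_ne {D : Set (Setoid V)} {i j : ↥D} (h : i.1 ≠ j.1) : i ≠ j :=
  fun hc => h (congrArg Subtype.val hc)

theorem adj_iff (hD : IsDecomp G D) (u v : V) :
    G.Adj u v ↔ (prodFam (Fs G D)).Adj (Phi D u) (Phi D v) := by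
  constructor
  · intro ha
    by_cases hne : u = v
    · subst hne
      obtain ⟨R, hR, htr⟩ := hD.loopT u ha
      refine ⟨⟨R, hR⟩, Or.inr ⟨rfl, u, ha, rfl, htr⟩, fun i _ => rfl⟩
    · obtain ⟨K, hK, hpar⟩ := hD.arc u v ha hne
      refine ⟨⟨K, hK⟩, Or.inl ⟨u, v, ha, hne, hpar, rfl, rfl⟩, ?_⟩
      intro i hi
      exact Quotient.sound (hpar i.1 i.2 (fun h => hi (Subtype.ext h)))
  · rintro ⟨⟨R, hR⟩, hadj, hoth⟩
    have hoth' : ∀ R' ∈ D, R' ≠ R → R'.r u v := fun R' hR' hne =>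
      Quotient.exact (hoth ⟨R', hR'⟩ (sub_ne hne))
    rcases hadj with ⟨p, q, hpq, hpqne, hpar, hp, hq⟩ | ⟨hcd, p, hpl, hpc, htr⟩
    · have hru : R.r p u := Quotient.exact hp
      obtain ⟨x, hx1, hx2, hx3⟩ := hD.tfwd R hR p q u hpq hpqne hpar hru
      have : x = v := by
        refine hD.sep x v (fun Q hQ => ?_)
        by_cases hQR : Q = R
        · subst hQR
          exact Q.trans (Q.symm hx2) (Quotient.exact hq)
        · exact Q.trans (Q.symm (hx3 Q hQ hQR)) (hoth' Q hQ hQR)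
      exact this ▸ hx1
    · have hru : R.r u v := Quotient.exact hcd
      have huv : u = v := hD.sep u v (fun Q hQ => by
        by_cases hQR : Q = R
        · exact hQR ▸ hru
        · exact hoth' Q hQ hQR)
      subst huv
      exact htr u (Quotient.exact hpc)

theorem phi_inj (hD : IsDecomp G D) : Function.Injective (Phi D) := by
  intro u v h
  exact hD.sep u v (fun R hR => Quotient.exact (congrFun h ⟨R, hR⟩))

theorem phi_reach (hD : IsDecomp G D) {p q : V} (h : G.shadow.Reachable p q) :
    (prodFam (Fs G D)).shadow.Reachable (Phi D p) (Phi D q) := by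
  obtain ⟨w⟩ := h
  induction w with
  | nil => exact SimpleGraph.Reachable.refl _
  | @cons a b c h w ih =>
    refine SimpleGraph.Reachable.trans ?_ ih
    obtain ⟨hne, harc⟩ := h
    have hpne : Phi D a ≠ Phi D b := fun hc => hne (phi_inj hD hc)
    rcases harc with h1 | h1
    · exact SimpleGraph.Adj.reachable ⟨hpne, Or.inl ((adj_iff hD a b).1 h1)⟩
    · exact SimpleGraph.Adj.reachable ⟨hpne, Or.inr ((adj_iff hD b a).1 h1)⟩

theorem phi_surj (hD : IsDecomp G D) {y z : ∀ i : ↥D, Quotient i.1}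
    (w : (prodFam (Fs G D)).shadow.Walk y z) :
    ∀ u : V, Phi D u = y → ∃ x : V, Phi D x = z := by
  induction w with
  | nil => exact fun u hu => ⟨u, hu⟩
  | @cons a b c h w ih =>
    intro u hu
    subst hu
    obtain ⟨hne, harc⟩ := h
    have step : ∃ x : V, Phi D x = b := by
      rcases harc with ⟨⟨R, hR⟩, hadj, hoth⟩ | ⟨⟨R, hR⟩, hadj, hoth⟩
      · rcases hadj with ⟨p, q, hpq, hpqne, hpar, hp, hq⟩ | ⟨hcd, -⟩
        · have hru : R.r p u := Quotient.exact hp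
          obtain ⟨x, hx1, hx2, hx3⟩ := hD.tfwd R hR p q u hpq hpqne hpar hru
          refine ⟨x, funext fun i => ?_⟩
          by_cases hiR : i = ⟨R, hR⟩
          · subst hiR
            exact (Quotient.sound hx2).symm.trans hq
          · have hi' : i.1 ≠ R := fun h => hiR (Subtype.ext h)
            exact (Quotient.sound (hx3 i.1 i.2 hi')).symm.trans (hoth i hiR)
        · exfalso
          refine hne (funext fun i => ?_)
          by_cases hiR : i = ⟨R, hR⟩
          · subst hiR; exact hcd
          · exact hoth i hiR
      · -- arc from b to Phi u
        rcases hadj with ⟨p, q, hpq, hpqne, hpar, hp, hq⟩ | ⟨hcd, -⟩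
        · have hru : R.r q u := Quotient.exact hq
          obtain ⟨x, hx1, hx2, hx3⟩ := hD.tbwd R hR p q u hpq hpqne hpar hru
          refine ⟨x, funext fun i => ?_⟩
          by_cases hiR : i = ⟨R, hR⟩
          · subst hiR
            exact (Quotient.sound hx2).symm.trans hp
          · have hi' : i.1 ≠ R := fun h => hiR (Subtype.ext h)
            exact (Quotient.sound (hx3 i.1 i.2 hi')).trans (hoth i hiR).symm
        · exfalso
          refine hne (funext fun i => ?_)
          by_cases hiR : i = ⟨R, hR⟩
          · subst hiR; exact hcd.symm
          · exact (hoth i hiR).symm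
    obtain ⟨x, hx⟩ := step
    exact ih x hx

theorem decomp_iso (hconn : G.Connected) (hD : IsDecomp G D) (v₀ : V) :
    Nonempty (G.Iso (weakProd (Fs G D) (Phi D v₀))) := by
  have hmem : ∀ v : V, Phi D v ∈ weakComponent (Fs G D) (Phi D v₀) := by
    intro v
    exact phi_reach hD (hconn.preconnected v₀ v)
  have hsurj : ∀ z : ↥(weakComponent (Fs G D) (Phi D v₀)), ∃ x : V, Phi D x = z.1 := by
    rintro ⟨z, hz⟩
    obtain ⟨w⟩ := hz
    exact phi_surj hD w v₀ rfl
  have hbij : Function.Bijective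
      (fun v => (⟨Phi D v, hmem v⟩ : ↥(weakComponent (Fs G D) (Phi D v₀)))) := by
    constructor
    · intro u v h
      exact phi_inj hD (congrArg Subtype.val h)
    · intro z
      obtain ⟨x, hx⟩ := hsurj z
      exact ⟨x, Subtype.ext hx⟩
  exact ⟨⟨Equiv.ofBijective _ hbij, fun {u v} => ((adj_iff hD u v).symm : _)⟩⟩

end Iso

section Order

variable (G : Digraph V)

/-- Decompositions of `G`. -/
def DecompT := {D : Set (Setoid V) // IsDecomp G D}

/-- Refinement order on decompositions. -/
def dle (D D' : DecompT G) : Prop :=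
  (∀ R ∈ D.1, ∃ S ⊆ D'.1, R = sInf S) ∧ (∀ R' ∈ D'.1, ∃ R ∈ D.1, R ≤ R')

variable {G}

theorem dle_refl (D : DecompT G) : dle G D D := by
  constructor
  · intro R hR
    exact ⟨{R}, Set.singleton_subset_iff.2 hR, sInf_singleton.symm⟩
  · intro R' hR'
    exact ⟨R', hR', le_refl _⟩

theorem dle_trans {D D' D'' : DecompT G} (h1 : dle G D D') (h2 : dle G D' D'') :
    dle G D D'' := by
  constructor
  · intro R hR
    obtain ⟨S, hS, hEq⟩ := h1.1 R hR
    choose T hT hTEq using fun Q (hQ : Q ∈ S) => h2.1 Q (hS hQ)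
    refine ⟨{P | ∃ Q, ∃ hQ : Q ∈ S, P ∈ T Q hQ}, ?_, ?_⟩
    · rintro P ⟨Q, hQ, hP⟩
      exact hT Q hQ hP
    · refine Setoid.ext fun a b => ?_
      constructor
      · intro h P hP
        obtain ⟨Q, hQ, hPQ⟩ := hP
        have hQr : Q.r a b := by
          have : (sInf S).r a b := hEq ▸ h
          exact this Q hQ
        have : (sInf (T Q hQ)).r a b := (hTEq Q hQ) ▸ hQr
        exact this P hPQ
      · intro h
        have : (sInf S).r a b := by
          intro Q hQ
          have : (sInf (T Q hQ)).r a b := fun P hP => h P ⟨Q, hQ, hP⟩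
          exact (hTEq Q hQ) ▸ this
        exact hEq ▸ this
  · intro R'' hR''
    obtain ⟨Q, hQ, hle⟩ := h2.2 R'' hR''
    obtain ⟨P, hP, hle'⟩ := h1.2 Q hQ
    exact ⟨P, hP, le_trans hle' hle⟩

theorem base_decomp (hnt : Nontrivial V) : IsDecomp G {(⊥ : Setoid V)} := by
  obtain ⟨a, b, hab⟩ := hnt
  refine ⟨?_, ?_, ?_, ?_, ?_, ?_⟩
  · rintro R rfl
    intro h
    refine hab ?_
    have : (⊤ : Setoid V).r a b := by
      rw [Setoid.top_def]
      trivial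
    rw [← h] at this
    exact this
  · intro u v h
    exact h ⊥ rfl
  · intro u v ha hne
    refine ⟨⊥, rfl, ?_⟩
    rintro R' rfl h
    exact absurd rfl h
  · rintro R rfl u v w ha hne hpar (rfl : u = w)
    exact ⟨v, ha, rfl, fun R' hR' h => absurd (Set.eq_of_mem_singleton hR') h⟩
  · rintro R rfl u v w ha hne hpar (rfl : v = w)
    exact ⟨u, ha, rfl, fun R' hR' h => absurd (Set.eq_of_mem_singleton hR') h⟩
  · intro u ha
    exact ⟨⊥, rfl, fun w (hw : u = w) => hw ▸ ha⟩

end Order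

section Cover

/-- A chain covered by finitely many downward-closed subsets is covered by one of them. -/
theorem chain_cover {α : Type*} {le : α → α → Prop} {C : Set α} (hch : IsChain le C)
    {ι : Type*} (L : List ι) (S : ι → Set α)
    (hCne : C.Nonempty) :
    (∀ i ∈ L, ∀ D ∈ C, ∀ D' ∈ C, le D D' → D' ∈ S i → D ∈ S i) →
    (∀ D ∈ C, ∃ i ∈ L, D ∈ S i) → ∃ i ∈ L, ∀ D ∈ C, D ∈ S i := by
  induction L with
  | nil =>
    intro _ hcov
    obtain ⟨D, hD⟩ := hCne
    obtain ⟨i, hi, -⟩ := hcov D hD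
    exact absurd hi List.not_mem_nil
  | cons i l ih =>
    intro hdown hcov
    by_cases hall : ∀ D ∈ C, D ∈ S i
    · exact ⟨i, List.mem_cons_self, hall⟩
    · push_neg at hall
      obtain ⟨D₀, hD₀, hD₀i⟩ := hall
      obtain ⟨j, hj, hD₀j⟩ := hcov D₀ hD₀
      have hjl : j ∈ l := by
        rcases List.mem_cons.1 hj with rfl | hjl
        · exact absurd hD₀j hD₀i
        · exact hjl
      have hcov' : ∀ D ∈ C, ∃ k ∈ l, D ∈ S k := by
        intro D hD
        by_cases hDD₀ : D = D₀
        · exact ⟨j, hjl, hDD₀ ▸ hD₀j⟩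
        · rcases hch hD hD₀ hDD₀ with h | h
          · exact ⟨j, hjl, hdown j hj D hD D₀ hD₀ h hD₀j⟩
          · obtain ⟨k, hk, hDk⟩ := hcov D hD
            rcases List.mem_cons.1 hk with rfl | hkl
            · exact absurd (hdown k hk D₀ hD₀ D hD h hDk) hD₀i
            · exact ⟨k, hkl, hDk⟩
      obtain ⟨k, hk, hres⟩ := ih (fun i hi => hdown i (List.mem_cons_of_mem _ hi)) hcov'
      exact ⟨k, List.mem_cons_of_mem _ hk, hres⟩

end Cover

section Chain

variable {G : Digraph V} {C : Set (DecompT G)}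

theorem kap_mono {D D' : DecompT G} (h : dle G D D') {u v : V} (ha : G.Adj u v)
    (hne : u ≠ v) : kap D.1 u v ≤ kap D'.1 u v := by
  obtain ⟨S, hS, hEq⟩ := h.1 _ (kap_mem D.2 hne)
  have hex : ∃ Q ∈ S, ¬ Q.r u v := by
    by_contra hc
    push_neg at hc
    exact kap_not D.2 hne (by rw [hEq]; exact fun Q hQ => hc Q hQ)
  obtain ⟨Q, hQS, hQ⟩ := hex
  have hk : kap D'.1 u v = Q := kap_eq D'.2 ha hne (hS hQS) hQ
  rw [hk, hEq]
  exact sInf_le hQS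

/-- If a coordinate of the coarser decomposition is below the fine coordinate of an arc,
it is the coarse coordinate of that arc. -/
theorem kap_anc {D D' : DecompT G} (h : dle G D D') {u v : V} (ha : G.Adj u v)
    (hne : u ≠ v) {Q : Setoid V} (hQ : Q ∈ D.1) (hle : Q ≤ kap D'.1 u v) :
    Q = kap D.1 u v := by
  by_contra hQne
  have h1 : Q.r u v := kap_par D.2 ha hne Q hQ hQne
  exact kap_not D'.2 hne (Setoid.le_def.1 hle h1)

/-- The limit coordinate of an arc along a chain. -/
def Tlim (C : Set (DecompT G)) (hch : IsChain (dle G) C) (hCne : C.Nonempty)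
    {u v : V} (ha : G.Adj u v) (hne : u ≠ v) : Setoid V where
  r x y := ∃ D ∈ C, (kap D.1 u v).r x y
  iseqv := by
    constructor
    · intro x
      obtain ⟨D, hD⟩ := hCne
      exact ⟨D, hD, (kap D.1 u v).iseqv.refl x⟩
    · rintro x y ⟨D, hD, h⟩
      exact ⟨D, hD, (kap D.1 u v).iseqv.symm h⟩
    · rintro x y z ⟨D1, hD1, h1⟩ ⟨D2, hD2, h2⟩
      by_cases heq : D1 = D2
      · subst heq
        exact ⟨D1, hD1, (kap D1.1 u v).iseqv.trans h1 h2⟩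
      · rcases hch hD1 hD2 heq with h | h
        · exact ⟨D2, hD2, (kap D2.1 u v).iseqv.trans
            (Setoid.le_def.1 (kap_mono h ha hne) h1) h2⟩
        · exact ⟨D1, hD1, (kap D1.1 u v).iseqv.trans h1
            (Setoid.le_def.1 (kap_mono h ha hne) h2)⟩

theorem tlim_r {hch : IsChain (dle G) C} {hCne : C.Nonempty} {u v x y : V}
    {ha : G.Adj u v} {hne : u ≠ v} :
    (Tlim C hch hCne ha hne).r x y ↔ ∃ D ∈ C, (kap D.1 u v).r x y := Iff.rfl

theorem tlim_lower {hch : IsChain (dle G) C} {hCne : C.Nonempty} {u v : V}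
    {ha : G.Adj u v} {hne : u ≠ v} {D : DecompT G} (hD : D ∈ C) :
    kap D.1 u v ≤ Tlim C hch hCne ha hne :=
  Setoid.le_def.2 fun h => ⟨D, hD, h⟩

theorem tlim_not {hch : IsChain (dle G) C} {hCne : C.Nonempty} {u v : V}
    {ha : G.Adj u v} {hne : u ≠ v} : ¬ (Tlim C hch hCne ha hne).r u v := by
  rintro ⟨D, hD, h⟩
  exact kap_not D.2 hne h

theorem top_r {a b : V} : (⊤ : Setoid V).r a b := by
  have : (⊤ : Setoid V) a b ↔ True := by rw [Setoid.top_def]; exact Iff.rfl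
  exact this.2 trivial

theorem ne_top_of_pair {R : Setoid V} {a b : V} (h : ¬ R.r a b) : R ≠ ⊤ :=
  fun hc => h (hc ▸ top_r)

/-- The limit decomposition along a chain. -/
def Dlim (C : Set (DecompT G)) (hch : IsChain (dle G) C) (hCne : C.Nonempty) :
    Set (Setoid V) :=
  {T | ∃ u v, ∃ (ha : G.Adj u v) (hne : u ≠ v), T = Tlim C hch hCne ha hne}

/-- Solutions of the forward transfer problem. -/
def Pfwd (G : Digraph V) (u v w : V) (D : DecompT G) (x : V) : Prop :=
  G.Adj w x ∧ (kap D.1 u v).r v x ∧ Par D.1 (kap D.1 u v) w x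

/-- Solutions of the backward transfer problem. -/
def Pbwd (G : Digraph V) (u v w : V) (D : DecompT G) (x : V) : Prop :=
  G.Adj x w ∧ (kap D.1 u v).r u x ∧ Par D.1 (kap D.1 u v) x w

section Transfer

variable {u v w : V}

theorem pfwd_ex (ha : G.Adj u v) (hne : u ≠ v) {D₀ D : DecompT G} (hle : dle G D₀ D) (h₀ : (kap D₀.1 u v).r u w) :
    ∃ x, Pfwd G u v w D x := by
  have huw : (kap D.1 u v).r u w := Setoid.le_def.1 (kap_mono hle ha hne) h₀
  obtain ⟨x, h1, h2, h3⟩ := D.2.tfwd _ (kap_mem D.2 hne) u v w ha hne (kap_par D.2 ha hne) huw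
  exact ⟨x, h1, h2, h3⟩

theorem pbwd_ex (ha : G.Adj u v) (hne : u ≠ v) {D₀ D : DecompT G} (hle : dle G D₀ D) (h₀ : (kap D₀.1 u v).r v w) :
    ∃ x, Pbwd G u v w D x := by
  have hvw : (kap D.1 u v).r v w := Setoid.le_def.1 (kap_mono hle ha hne) h₀
  obtain ⟨x, h1, h2, h3⟩ := D.2.tbwd _ (kap_mem D.2 hne) u v w ha hne (kap_par D.2 ha hne) hvw
  exact ⟨x, h1, h2, h3⟩

theorem pfwd_uniq (ha : G.Adj u v) (hne : u ≠ v) {D : DecompT G} {x y : V} (hx : Pfwd G u v w D x)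
    (hy : Pfwd G u v w D y) : x = y := by
  refine D.2.sep x y (fun Q hQ => ?_)
  by_cases hQk : Q = kap D.1 u v
  · have h1 : Q.r v x := by rw [hQk]; exact hx.2.1
    have h2 : Q.r v y := by rw [hQk]; exact hy.2.1
    exact Q.iseqv.trans (Q.iseqv.symm h1) h2
  · exact Q.iseqv.trans (Q.iseqv.symm (hx.2.2 Q hQ hQk)) (hy.2.2 Q hQ hQk)

theorem pbwd_uniq (ha : G.Adj u v) (hne : u ≠ v) {D : DecompT G} {x y : V} (hx : Pbwd G u v w D x)
    (hy : Pbwd G u v w D y) : x = y := by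
  refine D.2.sep x y (fun Q hQ => ?_)
  by_cases hQk : Q = kap D.1 u v
  · have h1 : Q.r u x := by rw [hQk]; exact hx.2.1
    have h2 : Q.r u y := by rw [hQk]; exact hy.2.1
    exact Q.iseqv.trans (Q.iseqv.symm h1) h2
  · exact Q.iseqv.trans (hx.2.2 Q hQ hQk) (Q.iseqv.symm (hy.2.2 Q hQ hQk))

theorem pfwd_down (ha : G.Adj u v) (hne : u ≠ v) {D₀ D D' : DecompT G} (hle0 : dle G D₀ D) (hle : dle G D D')
    (h₀ : (kap D₀.1 u v).r u w) {x : V} (hx : Pfwd G u v w D' x) : Pfwd G u v w D x := by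
  refine ⟨hx.1, ?_, ?_⟩
  · obtain ⟨S, hS, hEq⟩ := hle.1 _ (kap_mem D.2 hne)
    rw [hEq]
    intro Q hQS
    by_cases hQk : Q = kap D'.1 u v
    · rw [hQk]; exact hx.2.1
    · have h1 : Q.r u v := kap_par D'.2 ha hne Q (hS hQS) hQk
      have h2 : Q.r u w := by
        have huw : (kap D.1 u v).r u w := Setoid.le_def.1 (kap_mono hle0 ha hne) h₀
        have hlq : kap D.1 u v ≤ Q := hEq ▸ sInf_le hQS
        exact Setoid.le_def.1 hlq huw
      have h3 : Q.r w x := hx.2.2 Q (hS hQS) hQk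
      exact Q.iseqv.trans (Q.iseqv.symm h1) (Q.iseqv.trans h2 h3)
  · intro Q hQ hQk
    obtain ⟨S, hS, hEq⟩ := hle.1 Q hQ
    rw [hEq]
    intro P' hP'
    have hP'ne : P' ≠ kap D'.1 u v := by
      intro hPk
      have h1 : Q.r u v := kap_par D.2 ha hne Q hQ hQk
      have h2 : Q ≤ kap D'.1 u v := by rw [← hPk]; exact hEq ▸ sInf_le hP'
      exact kap_not D'.2 hne (Setoid.le_def.1 h2 h1)
    exact hx.2.2 P' (hS hP') hP'ne

theorem pbwd_down (ha : G.Adj u v) (hne : u ≠ v) {D₀ D D' : DecompT G} (hle0 : dle G D₀ D) (hle : dle G D D')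
    (h₀ : (kap D₀.1 u v).r v w) {x : V} (hx : Pbwd G u v w D' x) : Pbwd G u v w D x := by
  refine ⟨hx.1, ?_, ?_⟩
  · obtain ⟨S, hS, hEq⟩ := hle.1 _ (kap_mem D.2 hne)
    rw [hEq]
    intro Q hQS
    by_cases hQk : Q = kap D'.1 u v
    · rw [hQk]; exact hx.2.1
    · have h1 : Q.r u v := kap_par D'.2 ha hne Q (hS hQS) hQk
      have h2 : Q.r v w := by
        have hvw : (kap D.1 u v).r v w := Setoid.le_def.1 (kap_mono hle0 ha hne) h₀
        have hlq : kap D.1 u v ≤ Q := hEq ▸ sInf_le hQS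
        exact Setoid.le_def.1 hlq hvw
      have h3 : Q.r x w := hx.2.2 Q (hS hQS) hQk
      exact Q.iseqv.trans h1 (Q.iseqv.trans h2 (Q.iseqv.symm h3))
  · intro Q hQ hQk
    obtain ⟨S, hS, hEq⟩ := hle.1 Q hQ
    rw [hEq]
    intro P' hP'
    have hP'ne : P' ≠ kap D'.1 u v := by
      intro hPk
      have h1 : Q.r u v := kap_par D.2 ha hne Q hQ hQk
      have h2 : Q ≤ kap D'.1 u v := by rw [← hPk]; exact hEq ▸ sInf_le hP'
      exact kap_not D'.2 hne (Setoid.le_def.1 h2 h1)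
    exact hx.2.2 P' (hS hP') hP'ne

end Transfer

theorem dlim_decomp (hconn : G.Connected) {v₀ : V} (hv₀ : ¬ G.Adj v₀ v₀)
    (hch : IsChain (dle G) C) (hCne : C.Nonempty) : IsDecomp G (Dlim C hch hCne) := by
  constructor
  · -- ne_top
    rintro T ⟨p, q, hap, hpne, rfl⟩
    exact ne_top_of_pair tlim_not
  · -- sep
    intro x y h
    by_contra hxy
    obtain ⟨L, hL, hLr⟩ := reach_list hconn x y
    have hcov : ∀ D ∈ C, ∃ e ∈ L, D ∈ {D' | D' ∈ C ∧ ¬ (kap D'.1 e.1 e.2).r x y} := by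
      intro D hD
      obtain ⟨R, hR, hr⟩ := exists_coord D.2 hxy
      have hex : ∃ e ∈ L, ¬ R.r e.1 e.2 := by
        by_contra hc
        push_neg at hc
        exact hr (hLr R hc)
      obtain ⟨e, heL, hre⟩ := hex
      have hk : kap D.1 e.1 e.2 = R := kap_eq D.2 (hL e heL).1 (hL e heL).2 hR hre
      exact ⟨e, heL, hD, by rw [hk]; exact hr⟩
    have hdown : ∀ e ∈ L, ∀ D ∈ C, ∀ D' ∈ C, dle G D D' →
        D' ∈ {D' | D' ∈ C ∧ ¬ (kap D'.1 e.1 e.2).r x y} →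
        D ∈ {D' | D' ∈ C ∧ ¬ (kap D'.1 e.1 e.2).r x y} := by
      intro e heL D hD D' _ hle hD'
      exact ⟨hD, fun hr => hD'.2 (Setoid.le_def.1 (kap_mono hle (hL e heL).1 (hL e heL).2) hr)⟩
    obtain ⟨e, heL, hall⟩ := chain_cover hch L _ hCne hdown hcov
    exact (hall _ (hCne.choose_spec) |>.2) (h _ ⟨e.1, e.2, (hL e heL).1, (hL e heL).2, rfl⟩
      |> fun ⟨D, hD, hk⟩ => absurd hk (hall D hD).2) |> False.elim
  · -- arc
    intro p q hap hpne
    refine ⟨Tlim C hch hCne hap hpne, ⟨p, q, hap, hpne, rfl⟩, ?_⟩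
    rintro T' ⟨p', q', ha', hne', rfl⟩ hne''
    by_contra hc
    refine hne'' (Setoid.ext fun a b => ?_)
    have hkeq : ∀ D ∈ C, kap D.1 p' q' = kap D.1 p q := by
      intro D hD
      have hnr : ¬ (kap D.1 p' q').r p q := fun hr => hc ⟨D, hD, hr⟩
      exact (kap_eq D.2 hap hpne (kap_mem D.2 hne') hnr).symm
    constructor
    · rintro ⟨D, hD, hr⟩
      exact ⟨D, hD, by rw [← hkeq D hD]; exact hr⟩
    · rintro ⟨D, hD, hr⟩
      exact ⟨D, hD, by rw [hkeq D hD]; exact hr⟩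
  · -- tfwd
    rintro T ⟨p, q, hap, hpne, rfl⟩ u v w ha hne hpar hTuw
    have hTeq : Tlim C hch hCne hap hpne = Tlim C hch hCne ha hne := by
      by_contra hT
      exact tlim_not (hpar _ ⟨u, v, ha, hne, rfl⟩ (fun hcc => hT hcc.symm))
    rw [hTeq] at hTuw ⊢
    obtain ⟨D₀, hD₀, h₀⟩ := hTuw
    obtain ⟨x, hx⟩ := pfwd_ex ha hne (dle_refl D₀) h₀
    have hxAll : ∀ D, D ∈ C → dle G D₀ D → Pfwd G u v w D x := by
      intro D hD hle
      obtain ⟨y, hy⟩ := pfwd_ex ha hne hle h₀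
      have hy0 : Pfwd G u v w D₀ y := pfwd_down ha hne (dle_refl D₀) hle h₀ hy
      have hxy : x = y := pfwd_uniq ha hne hx hy0
      rw [hxy]
      exact hy
    refine ⟨x, hx.1, ⟨D₀, hD₀, hx.2.1⟩, ?_⟩
    rintro T' ⟨p', q', ha', hne', rfl⟩ hT'ne
    have hdiff : ∃ D₁ ∈ C, ∀ D, D ∈ C → dle G D₁ D → kap D.1 p' q' ≠ kap D.1 u v := by
      have hne2 : ¬ ∀ a b, (Tlim C hch hCne ha' hne').r a b ↔ (Tlim C hch hCne ha hne).r a b :=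
        fun hiff => hT'ne (Setoid.ext hiff)
      obtain ⟨a, ha2⟩ := not_forall.1 hne2
      obtain ⟨b, hb2⟩ := not_forall.1 ha2
      by_cases h1 : (Tlim C hch hCne ha' hne').r a b
      · have h2 : ¬ (Tlim C hch hCne ha hne).r a b := fun hh => hb2 ⟨fun _ => hh, fun _ => h1⟩
        obtain ⟨Da, hDa, hk⟩ := h1
        refine ⟨Da, hDa, ?_⟩
        intro D hD hle hkeq
        have hk' : (kap D.1 p' q').r a b := Setoid.le_def.1 (kap_mono hle ha' hne') hk
        exact h2 ⟨D, hD, by rw [← hkeq]; exact hk'⟩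
      · have h2 : (Tlim C hch hCne ha hne).r a b := by
          by_contra h3
          exact hb2 ⟨fun hh => absurd hh h1, fun hh => absurd hh h3⟩
        obtain ⟨Da, hDa, hk⟩ := h2
        refine ⟨Da, hDa, ?_⟩
        intro D hD hle hkeq
        have hk' : (kap D.1 u v).r a b := Setoid.le_def.1 (kap_mono hle ha hne) hk
        exact h1 ⟨D, hD, by rw [hkeq]; exact hk'⟩
    obtain ⟨D₁, hD₁, hD₁p⟩ := hdiff
    obtain ⟨D₂, hD₂, h02, h12⟩ : ∃ D₂ ∈ C, dle G D₀ D₂ ∧ dle G D₁ D₂ := by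
      by_cases heq : D₀ = D₁
      · exact ⟨D₁, hD₁, heq ▸ dle_refl _, dle_refl _⟩
      · rcases hch hD₀ hD₁ heq with hle | hle
        · exact ⟨D₁, hD₁, hle, dle_refl _⟩
        · exact ⟨D₀, hD₀, dle_refl _, hle⟩
    have hPx := hxAll D₂ hD₂ h02
    exact ⟨D₂, hD₂, hPx.2.2 _ (kap_mem D₂.2 hne') (hD₁p D₂ hD₂ h12)⟩
  · -- tbwd
    rintro T ⟨p, q, hap, hpne, rfl⟩ u v w ha hne hpar hTvw
    have hTeq : Tlim C hch hCne hap hpne = Tlim C hch hCne ha hne := by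
      by_contra hT
      exact tlim_not (hpar _ ⟨u, v, ha, hne, rfl⟩ (fun hcc => hT hcc.symm))
    rw [hTeq] at hTvw ⊢
    obtain ⟨D₀, hD₀, h₀⟩ := hTvw
    obtain ⟨x, hx⟩ := pbwd_ex ha hne (dle_refl D₀) h₀
    have hxAll : ∀ D, D ∈ C → dle G D₀ D → Pbwd G u v w D x := by
      intro D hD hle
      obtain ⟨y, hy⟩ := pbwd_ex ha hne hle h₀
      have hy0 : Pbwd G u v w D₀ y := pbwd_down ha hne (dle_refl D₀) hle h₀ hy
      have hxy : x = y := pbwd_uniq ha hne hx hy0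
      rw [hxy]
      exact hy
    refine ⟨x, hx.1, ⟨D₀, hD₀, hx.2.1⟩, ?_⟩
    rintro T' ⟨p', q', ha', hne', rfl⟩ hT'ne
    have hdiff : ∃ D₁ ∈ C, ∀ D, D ∈ C → dle G D₁ D → kap D.1 p' q' ≠ kap D.1 u v := by
      have hne2 : ¬ ∀ a b, (Tlim C hch hCne ha' hne').r a b ↔ (Tlim C hch hCne ha hne).r a b :=
        fun hiff => hT'ne (Setoid.ext hiff)
      obtain ⟨a, ha2⟩ := not_forall.1 hne2
      obtain ⟨b, hb2⟩ := not_forall.1 ha2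
      by_cases h1 : (Tlim C hch hCne ha' hne').r a b
      · have h2 : ¬ (Tlim C hch hCne ha hne).r a b := fun hh => hb2 ⟨fun _ => hh, fun _ => h1⟩
        obtain ⟨Da, hDa, hk⟩ := h1
        refine ⟨Da, hDa, ?_⟩
        intro D hD hle hkeq
        have hk' : (kap D.1 p' q').r a b := Setoid.le_def.1 (kap_mono hle ha' hne') hk
        exact h2 ⟨D, hD, by rw [← hkeq]; exact hk'⟩
      · have h2 : (Tlim C hch hCne ha hne).r a b := by
          by_contra h3
          exact hb2 ⟨fun hh => absurd hh h1, fun hh => absurd hh h3⟩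
        obtain ⟨Da, hDa, hk⟩ := h2
        refine ⟨Da, hDa, ?_⟩
        intro D hD hle hkeq
        have hk' : (kap D.1 u v).r a b := Setoid.le_def.1 (kap_mono hle ha hne) hk
        exact h1 ⟨D, hD, by rw [hkeq]; exact hk'⟩
    obtain ⟨D₁, hD₁, hD₁p⟩ := hdiff
    obtain ⟨D₂, hD₂, h02, h12⟩ : ∃ D₂ ∈ C, dle G D₀ D₂ ∧ dle G D₁ D₂ := by
      by_cases heq : D₀ = D₁
      · exact ⟨D₁, hD₁, heq ▸ dle_refl _, dle_refl _⟩
      · rcases hch hD₀ hD₁ heq with hle | hle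
        · exact ⟨D₁, hD₁, hle, dle_refl _⟩
        · exact ⟨D₀, hD₀, dle_refl _, hle⟩
    have hPx := hxAll D₂ hD₂ h02
    exact ⟨D₂, hD₂, hPx.2.2 _ (kap_mem D₂.2 hne') (hD₁p D₂ hD₂ h12)⟩
  · -- loopT
    intro p hloop
    obtain ⟨L, hL, hLr⟩ := reach_list hconn p v₀
    have hcov : ∀ D ∈ C, ∃ e ∈ L,
        D ∈ {D' | D' ∈ C ∧ ∀ z, (kap D'.1 e.1 e.2).r p z → G.Adj z z} := by
      intro D hD
      obtain ⟨R, hR, htr⟩ := D.2.loopT p hloop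
      have hnr : ¬ R.r p v₀ := fun hh => hv₀ (htr v₀ hh)
      have hex : ∃ e ∈ L, ¬ R.r e.1 e.2 := by
        by_contra hc
        push_neg at hc
        exact hnr (hLr R hc)
      obtain ⟨e, heL, hre⟩ := hex
      have hk : kap D.1 e.1 e.2 = R := kap_eq D.2 (hL e heL).1 (hL e heL).2 hR hre
      refine ⟨e, heL, hD, ?_⟩
      rw [hk]
      exact htr
    have hdown : ∀ e ∈ L, ∀ D ∈ C, ∀ D' ∈ C, dle G D D' →
        D' ∈ {D' | D' ∈ C ∧ ∀ z, (kap D'.1 e.1 e.2).r p z → G.Adj z z} →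
        D ∈ {D' | D' ∈ C ∧ ∀ z, (kap D'.1 e.1 e.2).r p z → G.Adj z z} := by
      intro e heL D hD D' _ hle hD'
      exact ⟨hD, fun z hz =>
        hD'.2 z (Setoid.le_def.1 (kap_mono hle (hL e heL).1 (hL e heL).2) hz)⟩
    obtain ⟨e, heL, hall⟩ := chain_cover hch L _ hCne hdown hcov
    refine ⟨Tlim C hch hCne (hL e heL).1 (hL e heL).2, ⟨e.1, e.2, (hL e heL).1, (hL e heL).2, rfl⟩, ?_⟩
    rintro z ⟨D, hD, hz⟩
    exact (hall D hD).2 z hz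

theorem dle_dlim (hconn : G.Connected) (hch : IsChain (dle G) C) (hCne : C.Nonempty)
    {D : DecompT G} (hD : D ∈ C) (hlim : IsDecomp G (Dlim C hch hCne)) :
    dle G D ⟨Dlim C hch hCne, hlim⟩ := by
  have total : ∀ {D₁ D₂ : DecompT G}, D₁ ∈ C → D₂ ∈ C → D₁ = D₂ ∨ dle G D₁ D₂ ∨ dle G D₂ D₁ := by
    intro D₁ D₂ h1 h2
    by_cases he : D₁ = D₂
    · exact Or.inl he
    · exact Or.inr (hch h1 h2 he)
  constructor
  · intro R hR
    refine ⟨{T | T ∈ Dlim C hch hCne ∧ R ≤ T}, fun T hT => hT.1, ?_⟩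
    have h1 : R ≤ sInf {T | T ∈ Dlim C hch hCne ∧ R ≤ T} := le_sInf fun T hT => hT.2
    have h2 : sInf {T | T ∈ Dlim C hch hCne ∧ R ≤ T} ≤ R := by
      refine Setoid.le_def.2 ?_
      intro x y hxy
      by_contra hnr
      have hch' : IsChain (dle G) {D' | D' ∈ C ∧ dle G D D'} :=
        hch.mono (fun D' hD' => hD'.1)
      have hC'ne : ({D' | D' ∈ C ∧ dle G D D'} : Set (DecompT G)).Nonempty :=
        ⟨D, hD, dle_refl D⟩
      obtain ⟨L, hL, hLr⟩ := reach_list hconn x y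
      have hcov : ∀ D' ∈ {D' | D' ∈ C ∧ dle G D D'}, ∃ e ∈ L,
          D' ∈ {D'' | D'' ∈ {D' | D' ∈ C ∧ dle G D D'} ∧
            R ≤ kap D''.1 e.1 e.2 ∧ ¬ (kap D''.1 e.1 e.2).r x y} := by
        rintro D' ⟨hD'C, hDD'⟩
        obtain ⟨S₀, hS₀, hEq⟩ := hDD'.1 R hR
        have hex : ∃ Q ∈ S₀, ¬ Q.r x y := by
          by_contra hc2
          push_neg at hc2
          exact hnr (by rw [hEq]; exact fun Q hQ => hc2 Q hQ)
        obtain ⟨Q, hQS, hQ⟩ := hex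
        have hRQ : R ≤ Q := hEq ▸ sInf_le hQS
        have hex2 : ∃ e ∈ L, ¬ Q.r e.1 e.2 := by
          by_contra hc2
          push_neg at hc2
          exact hQ (hLr Q hc2)
        obtain ⟨e, heL, hre⟩ := hex2
        have hk : kap D'.1 e.1 e.2 = Q :=
          kap_eq D'.2 (hL e heL).1 (hL e heL).2 (hS₀ hQS) hre
        exact ⟨e, heL, ⟨hD'C, hDD'⟩, by rw [hk]; exact hRQ, by rw [hk]; exact hQ⟩
      have hdown : ∀ e ∈ L, ∀ D₁ ∈ {D' | D' ∈ C ∧ dle G D D'},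
          ∀ D₂ ∈ {D' | D' ∈ C ∧ dle G D D'}, dle G D₁ D₂ →
          D₂ ∈ {D'' | D'' ∈ {D' | D' ∈ C ∧ dle G D D'} ∧
            R ≤ kap D''.1 e.1 e.2 ∧ ¬ (kap D''.1 e.1 e.2).r x y} →
          D₁ ∈ {D'' | D'' ∈ {D' | D' ∈ C ∧ dle G D D'} ∧
            R ≤ kap D''.1 e.1 e.2 ∧ ¬ (kap D''.1 e.1 e.2).r x y} := by
        rintro e heL D₁ hD₁ D₂ hD₂ hle ⟨-, hRle, hnxy⟩
        refine ⟨hD₁, ?_,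
          fun hr => hnxy (Setoid.le_def.1 (kap_mono hle (hL e heL).1 (hL e heL).2) hr)⟩
        have hRD : R = kap D.1 e.1 e.2 :=
          kap_anc hD₂.2 (hL e heL).1 (hL e heL).2 hR hRle
        rw [hRD]
        exact kap_mono hD₁.2 (hL e heL).1 (hL e heL).2
      obtain ⟨e, heL, hall⟩ := chain_cover hch' L _ hC'ne hdown hcov
      have hTmem : Tlim C hch hCne (hL e heL).1 (hL e heL).2 ∈ Dlim C hch hCne :=
        ⟨e.1, e.2, (hL e heL).1, (hL e heL).2, rfl⟩
      have hRT : R ≤ Tlim C hch hCne (hL e heL).1 (hL e heL).2 :=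
        le_trans (hall D ⟨hD, dle_refl D⟩).2.1 (tlim_lower hD)
      have hnT : ¬ (Tlim C hch hCne (hL e heL).1 (hL e heL).2).r x y := by
        rintro ⟨D₃, hD₃, h₃⟩
        by_cases heq : D₃ = D
        · exact (hall D ⟨hD, dle_refl D⟩).2.2 (by rw [← heq]; exact h₃)
        · rcases hch hD₃ hD heq with hle | hle
          · exact (hall D ⟨hD, dle_refl D⟩).2.2
              (Setoid.le_def.1 (kap_mono hle (hL e heL).1 (hL e heL).2) h₃)
          · exact (hall D₃ ⟨hD₃, hle⟩).2.2 h₃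
      exact hnT (hxy _ ⟨hTmem, hRT⟩)
    exact le_antisymm h1 h2
  · rintro T ⟨p, q, hap, hpne, rfl⟩
    exact ⟨kap D.1 p q, kap_mem D.2 hpne, tlim_lower hD⟩

end Chain

section Split

variable {G : Digraph V}

theorem max_prime (hconn : G.Connected) {v₀ : V} (hv₀ : ¬ G.Adj v₀ v₀)
    {M : DecompT G} (hmax : ∀ a, dle G M a → dle G a M) {R : Setoid V} (hR : R ∈ M.1) :
    (fac G M.1 R).IsPrime := by
  refine ⟨fac_connected hconn M.2 hR, fac_nontrivial M.2 hR,
    ⟨Quotient.mk R v₀, fac_unlooped M.2 hR hv₀⟩, ?_⟩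
  intro A B GA GB hψ
  obtain ⟨ψ⟩ := hψ
  by_contra hAB
  push_neg at hAB
  obtain ⟨hA, hB⟩ := hAB
  have hANe : Nonempty A := ⟨(ψ (Quotient.mk R v₀)).1⟩
  have hBNe : Nonempty B := ⟨(ψ (Quotient.mk R v₀)).2⟩
  have hAnt : Nontrivial A := hA hANe
  have hBnt : Nontrivial B := hB hBNe
  set R1 : Setoid V := ⟨fun a b => (ψ (Quotient.mk R a)).1 = (ψ (Quotient.mk R b)).1,
    ⟨fun _ => rfl, fun h => h.symm, fun h1 h2 => h1.trans h2⟩⟩ with hR1def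
  set R2 : Setoid V := ⟨fun a b => (ψ (Quotient.mk R a)).2 = (ψ (Quotient.mk R b)).2,
    ⟨fun _ => rfl, fun h => h.symm, fun h1 h2 => h1.trans h2⟩⟩ with hR2def
  have hR1r : ∀ a b : V, R1.r a b ↔ (ψ (Quotient.mk R a)).1 = (ψ (Quotient.mk R b)).1 :=
    fun a b => Iff.rfl
  have hR2r : ∀ a b : V, R2.r a b ↔ (ψ (Quotient.mk R a)).2 = (ψ (Quotient.mk R b)).2 :=
    fun a b => Iff.rfl
  have hRiff : ∀ a b : V, R.r a b ↔ (R1.r a b ∧ R2.r a b) := by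
    intro a b
    constructor
    · intro h
      have hq : Quotient.mk R a = Quotient.mk R b := Quotient.sound h
      constructor
      · rw [hR1r, hq]
      · rw [hR2r, hq]
    · rintro ⟨h1, h2⟩
      rw [hR1r] at h1
      rw [hR2r] at h2
      have : ψ (Quotient.mk R a) = ψ (Quotient.mk R b) := Prod.ext h1 h2
      exact Quotient.exact (ψ.injective this)
  have pairA : ∀ u : V, ∃ v : V, ¬ R1.r u v ∧ R2.r u v ∧ Par M.1 R u v := by
    intro u
    obtain ⟨a', ha'⟩ := exists_ne (ψ (Quotient.mk R u)).1
    obtain ⟨v, hv1, hv2⟩ := move hconn M.2 hR u (ψ.symm (a', (ψ (Quotient.mk R u)).2))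
    have hψv : ψ (Quotient.mk R v) = (a', (ψ (Quotient.mk R u)).2) := by
      rw [hv1]; exact ψ.apply_symm_apply _
    refine ⟨v, ?_, ?_, hv2⟩
    · rw [hR1r, hψv]
      exact fun h => ha' h.symm
    · rw [hR2r, hψv]
  have pairB : ∀ u : V, ∃ v : V, ¬ R2.r u v ∧ R1.r u v ∧ Par M.1 R u v := by
    intro u
    obtain ⟨b', hb'⟩ := exists_ne (ψ (Quotient.mk R u)).2
    obtain ⟨v, hv1, hv2⟩ := move hconn M.2 hR u (ψ.symm ((ψ (Quotient.mk R u)).1, b'))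
    have hψv : ψ (Quotient.mk R v) = ((ψ (Quotient.mk R u)).1, b') := by
      rw [hv1]; exact ψ.apply_symm_apply _
    refine ⟨v, ?_, ?_, hv2⟩
    · rw [hR2r, hψv]
      exact fun h => hb' h.symm
    · rw [hR1r, hψv]
  have hR1R : R1 ≠ R := by
    obtain ⟨v, hv1, hv2, -⟩ := pairB v₀
    intro h
    exact hv1 ((hRiff v₀ v).1 (by rw [← h]; exact hv2)).2
  have hR2R : R2 ≠ R := by
    obtain ⟨v, hv1, hv2, -⟩ := pairA v₀
    intro h
    exact hv1 ((hRiff v₀ v).1 (by rw [← h]; exact hv2)).1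
  have hR1R2 : R1 ≠ R2 := by
    obtain ⟨v, hv1, hv2, -⟩ := pairA v₀
    exact fun h => hv1 (by rw [h]; exact hv2)
  have hR1nM : ∀ Q ∈ M.1, Q ≠ R → R1 ≠ Q := by
    intro Q hQ hQR h
    obtain ⟨v, hv1, -, hv3⟩ := pairA v₀
    exact hv1 (by rw [h]; exact hv3 Q hQ hQR)
  have hR2nM : ∀ Q ∈ M.1, Q ≠ R → R2 ≠ Q := by
    intro Q hQ hQR h
    obtain ⟨v, hv1, -, hv3⟩ := pairB v₀
    exact hv1 (by rw [h]; exact hv3 Q hQ hQR)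
  set M' : Set (Setoid V) := insert R1 (insert R2 (M.1 \ {R})) with hM'def
  have hmem1 : R1 ∈ M' := Set.mem_insert _ _
  have hmem2 : R2 ∈ M' := Set.mem_insert_of_mem _ (Set.mem_insert _ _)
  have hmemo : ∀ Q ∈ M.1, Q ≠ R → Q ∈ M' :=
    fun Q hQ hQR => Set.mem_insert_of_mem _ (Set.mem_insert_of_mem _ ⟨hQ, hQR⟩)
  have hmem_cases : ∀ Q ∈ M', Q = R1 ∨ Q = R2 ∨ (Q ∈ M.1 ∧ Q ≠ R) := by
    intro Q hQ
    rcases Set.mem_insert_iff.1 hQ with h | h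
    · exact Or.inl h
    · rcases Set.mem_insert_iff.1 h with h2 | h2
      · exact Or.inr (Or.inl h2)
      · exact Or.inr (Or.inr ⟨h2.1, h2.2⟩)
  have hsep' : ∀ u v : V, (∀ Q ∈ M', Q.r u v) → u = v := by
    intro u v h
    refine M.2.sep u v (fun Q hQ => ?_)
    by_cases hQR : Q = R
    · rw [hQR]
      exact (hRiff u v).2 ⟨h R1 hmem1, h R2 hmem2⟩
    · exact h Q (hmemo Q hQ hQR)
  have hfadj : ∀ u v : V, G.Adj u v → u ≠ v → Par M.1 R u v →
      (GA.boxProd GB).Adj (ψ (Quotient.mk R u)) (ψ (Quotient.mk R v)) := by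
    intro u v ha hne hp
    exact ψ.map_rel_iff.2 (Or.inl ⟨u, v, ha, hne, hp, rfl, rfl⟩)
  have hfadj' : ∀ c d : Quotient R, (GA.boxProd GB).Adj (ψ c) (ψ d) → (fac G M.1 R).Adj c d :=
    fun c d h => ψ.map_rel_iff.1 h
  -- the four transfer steps in the new coordinates
  have hstepA : ∀ u v w : V, G.Adj u v → u ≠ v → Par M' R1 u v → R1.r u w →
      ∃ x, G.Adj w x ∧ R1.r v x ∧ Par M' R1 w x := by
    intro u v w ha hne hpar huw
    have hR2uv : R2.r u v := hpar R2 hmem2 (fun h => hR1R2 h.symm)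
    have hparM : Par M.1 R u v := fun Q hQ hQR =>
      hpar Q (hmemo Q hQ hQR) (fun h => hR1nM Q hQ hQR h.symm)
    have hnR : ¬ R.r u v := par_not M.2 hR hparM hne
    rcases hfadj u v ha hne hparM with ⟨hAadj, hBeq⟩ | ⟨hAeq, hBadj⟩
    · have hψc : ψ (ψ.symm ((ψ (Quotient.mk R v)).1, (ψ (Quotient.mk R w)).2)) =
          ((ψ (Quotient.mk R v)).1, (ψ (Quotient.mk R w)).2) := ψ.apply_symm_apply _
      have hbox2 : (GA.boxProd GB).Adj (ψ (Quotient.mk R w))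
          (ψ (ψ.symm ((ψ (Quotient.mk R v)).1, (ψ (Quotient.mk R w)).2))) := by
        rw [hψc]
        left
        refine ⟨?_, rfl⟩
        have h1 : (ψ (Quotient.mk R w)).1 = (ψ (Quotient.mk R u)).1 := ((hR1r u w).1 huw).symm
        rw [h1]
        exact hAadj
      rcases hfadj' _ _ hbox2 with ⟨p, q, hpq, hpqne, hparpq, hp, hq⟩ | ⟨hcd, -⟩
      · have hrpw : R.r p w := Quotient.exact hp
        obtain ⟨x, hx1, hx2, hx3⟩ := M.2.tfwd R hR p q w hpq hpqne hparpq hrpw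
        have hmkx : Quotient.mk R x = ψ.symm ((ψ (Quotient.mk R v)).1, (ψ (Quotient.mk R w)).2) :=
          (Quotient.sound hx2).symm.trans hq
        have hψx : ψ (Quotient.mk R x) = ((ψ (Quotient.mk R v)).1, (ψ (Quotient.mk R w)).2) := by
          rw [hmkx]
          exact hψc
        refine ⟨x, hx1, ?_, ?_⟩
        · rw [hR1r, hψx]
        · intro Q hQ hQne
          rcases hmem_cases Q hQ with h | h | ⟨hQM, hQR⟩
          · exact absurd h hQne
          · rw [h, hR2r, hψx]
          · exact hx3 Q hQM hQR
      · exfalso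
        have hwc : ψ (Quotient.mk R w) = ((ψ (Quotient.mk R v)).1, (ψ (Quotient.mk R w)).2) :=
          (congrArg ψ hcd).trans hψc
        have hα : (ψ (Quotient.mk R w)).1 = (ψ (Quotient.mk R v)).1 := by rw [hwc]
        have h1 : R1.r u v := (hR1r u v).2 (((hR1r u w).1 huw).trans hα)
        exact hnR ((hRiff u v).2 ⟨h1, hR2uv⟩)
    · exfalso
      exact hnR ((hRiff u v).2 ⟨(hR1r u v).2 hAeq, hR2uv⟩)
  have hstepB : ∀ u v w : V, G.Adj u v → u ≠ v → Par M' R2 u v → R2.r u w →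
      ∃ x, G.Adj w x ∧ R2.r v x ∧ Par M' R2 w x := by
    intro u v w ha hne hpar huw
    have hR1uv : R1.r u v := hpar R1 hmem1 hR1R2
    have hparM : Par M.1 R u v := fun Q hQ hQR =>
      hpar Q (hmemo Q hQ hQR) (fun h => hR2nM Q hQ hQR h.symm)
    have hnR : ¬ R.r u v := par_not M.2 hR hparM hne
    rcases hfadj u v ha hne hparM with ⟨hAadj, hBeq⟩ | ⟨hAeq, hBadj⟩
    · exfalso
      exact hnR ((hRiff u v).2 ⟨hR1uv, (hR2r u v).2 hBeq⟩)
    · have hψc : ψ (ψ.symm ((ψ (Quotient.mk R w)).1, (ψ (Quotient.mk R v)).2)) =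
          ((ψ (Quotient.mk R w)).1, (ψ (Quotient.mk R v)).2) := ψ.apply_symm_apply _
      have hbox2 : (GA.boxProd GB).Adj (ψ (Quotient.mk R w))
          (ψ (ψ.symm ((ψ (Quotient.mk R w)).1, (ψ (Quotient.mk R v)).2))) := by
        rw [hψc]
        right
        refine ⟨rfl, ?_⟩
        have h1 : (ψ (Quotient.mk R w)).2 = (ψ (Quotient.mk R u)).2 := ((hR2r u w).1 huw).symm
        rw [h1]
        exact hBadj
      rcases hfadj' _ _ hbox2 with ⟨p, q, hpq, hpqne, hparpq, hp, hq⟩ | ⟨hcd, -⟩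
      · have hrpw : R.r p w := Quotient.exact hp
        obtain ⟨x, hx1, hx2, hx3⟩ := M.2.tfwd R hR p q w hpq hpqne hparpq hrpw
        have hmkx : Quotient.mk R x = ψ.symm ((ψ (Quotient.mk R w)).1, (ψ (Quotient.mk R v)).2) :=
          (Quotient.sound hx2).symm.trans hq
        have hψx : ψ (Quotient.mk R x) = ((ψ (Quotient.mk R w)).1, (ψ (Quotient.mk R v)).2) := by
          rw [hmkx]
          exact hψc
        refine ⟨x, hx1, ?_, ?_⟩
        · rw [hR2r, hψx]
        · intro Q hQ hQne
          rcases hmem_cases Q hQ with h | h | ⟨hQM, hQR⟩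
          · rw [h, hR1r, hψx]
          · exact absurd h hQne
          · exact hx3 Q hQM hQR
      · exfalso
        have hwc : ψ (Quotient.mk R w) = ((ψ (Quotient.mk R w)).1, (ψ (Quotient.mk R v)).2) :=
          (congrArg ψ hcd).trans hψc
        have hβ : (ψ (Quotient.mk R w)).2 = (ψ (Quotient.mk R v)).2 := by rw [hwc]
        have h2 : R2.r u v := (hR2r u v).2 (((hR2r u w).1 huw).trans hβ)
        exact hnR ((hRiff u v).2 ⟨hR1uv, h2⟩)
  have hstepA' : ∀ u v w : V, G.Adj u v → u ≠ v → Par M' R1 u v → R1.r v w →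
      ∃ x, G.Adj x w ∧ R1.r u x ∧ Par M' R1 x w := by
    intro u v w ha hne hpar hvw
    have hR2uv : R2.r u v := hpar R2 hmem2 (fun h => hR1R2 h.symm)
    have hparM : Par M.1 R u v := fun Q hQ hQR =>
      hpar Q (hmemo Q hQ hQR) (fun h => hR1nM Q hQ hQR h.symm)
    have hnR : ¬ R.r u v := par_not M.2 hR hparM hne
    rcases hfadj u v ha hne hparM with ⟨hAadj, hBeq⟩ | ⟨hAeq, hBadj⟩
    · have hψc : ψ (ψ.symm ((ψ (Quotient.mk R u)).1, (ψ (Quotient.mk R w)).2)) =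
          ((ψ (Quotient.mk R u)).1, (ψ (Quotient.mk R w)).2) := ψ.apply_symm_apply _
      have hbox2 : (GA.boxProd GB).Adj
          (ψ (ψ.symm ((ψ (Quotient.mk R u)).1, (ψ (Quotient.mk R w)).2)))
          (ψ (Quotient.mk R w)) := by
        rw [hψc]
        left
        refine ⟨?_, rfl⟩
        have h1 : (ψ (Quotient.mk R w)).1 = (ψ (Quotient.mk R v)).1 := ((hR1r v w).1 hvw).symm
        rw [h1]
        exact hAadj
      rcases hfadj' _ _ hbox2 with ⟨p, q, hpq, hpqne, hparpq, hp, hq⟩ | ⟨hcd, -⟩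
      · have hrqw : R.r q w := Quotient.exact hq
        obtain ⟨x, hx1, hx2, hx3⟩ := M.2.tbwd R hR p q w hpq hpqne hparpq hrqw
        have hmkx : Quotient.mk R x = ψ.symm ((ψ (Quotient.mk R u)).1, (ψ (Quotient.mk R w)).2) :=
          (Quotient.sound hx2).symm.trans hp
        have hψx : ψ (Quotient.mk R x) = ((ψ (Quotient.mk R u)).1, (ψ (Quotient.mk R w)).2) := by
          rw [hmkx]
          exact hψc
        refine ⟨x, hx1, ?_, ?_⟩
        · rw [hR1r, hψx]
        · intro Q hQ hQne
          rcases hmem_cases Q hQ with h | h | ⟨hQM, hQR⟩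
          · exact absurd h hQne
          · rw [h, hR2r, hψx]
          · exact hx3 Q hQM hQR
      · exfalso
        have hwc : ψ (Quotient.mk R w) = ((ψ (Quotient.mk R u)).1, (ψ (Quotient.mk R w)).2) :=
          (congrArg ψ hcd.symm).trans hψc
        have hα : (ψ (Quotient.mk R w)).1 = (ψ (Quotient.mk R u)).1 := by rw [hwc]
        have h1 : R1.r u v := (hR1r u v).2 (hα.symm.trans ((hR1r v w).1 hvw).symm)
        exact hnR ((hRiff u v).2 ⟨h1, hR2uv⟩)
    · exfalso
      exact hnR ((hRiff u v).2 ⟨(hR1r u v).2 hAeq, hR2uv⟩)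
  have hstepB' : ∀ u v w : V, G.Adj u v → u ≠ v → Par M' R2 u v → R2.r v w →
      ∃ x, G.Adj x w ∧ R2.r u x ∧ Par M' R2 x w := by
    intro u v w ha hne hpar hvw
    have hR1uv : R1.r u v := hpar R1 hmem1 hR1R2
    have hparM : Par M.1 R u v := fun Q hQ hQR =>
      hpar Q (hmemo Q hQ hQR) (fun h => hR2nM Q hQ hQR h.symm)
    have hnR : ¬ R.r u v := par_not M.2 hR hparM hne
    rcases hfadj u v ha hne hparM with ⟨hAadj, hBeq⟩ | ⟨hAeq, hBadj⟩
    · exfalso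
      exact hnR ((hRiff u v).2 ⟨hR1uv, (hR2r u v).2 hBeq⟩)
    · have hψc : ψ (ψ.symm ((ψ (Quotient.mk R w)).1, (ψ (Quotient.mk R u)).2)) =
          ((ψ (Quotient.mk R w)).1, (ψ (Quotient.mk R u)).2) := ψ.apply_symm_apply _
      have hbox2 : (GA.boxProd GB).Adj
          (ψ (ψ.symm ((ψ (Quotient.mk R w)).1, (ψ (Quotient.mk R u)).2)))
          (ψ (Quotient.mk R w)) := by
        rw [hψc]
        right
        refine ⟨rfl, ?_⟩
        have h1 : (ψ (Quotient.mk R w)).2 = (ψ (Quotient.mk R v)).2 := ((hR2r v w).1 hvw).symm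
        rw [h1]
        exact hBadj
      rcases hfadj' _ _ hbox2 with ⟨p, q, hpq, hpqne, hparpq, hp, hq⟩ | ⟨hcd, -⟩
      · have hrqw : R.r q w := Quotient.exact hq
        obtain ⟨x, hx1, hx2, hx3⟩ := M.2.tbwd R hR p q w hpq hpqne hparpq hrqw
        have hmkx : Quotient.mk R x = ψ.symm ((ψ (Quotient.mk R w)).1, (ψ (Quotient.mk R u)).2) :=
          (Quotient.sound hx2).symm.trans hp
        have hψx : ψ (Quotient.mk R x) = ((ψ (Quotient.mk R w)).1, (ψ (Quotient.mk R u)).2) := by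
          rw [hmkx]
          exact hψc
        refine ⟨x, hx1, ?_, ?_⟩
        · rw [hR2r, hψx]
        · intro Q hQ hQne
          rcases hmem_cases Q hQ with h | h | ⟨hQM, hQR⟩
          · rw [h, hR1r, hψx]
          · exact absurd h hQne
          · exact hx3 Q hQM hQR
      · exfalso
        have hwc : ψ (Quotient.mk R w) = ((ψ (Quotient.mk R w)).1, (ψ (Quotient.mk R u)).2) :=
          (congrArg ψ hcd.symm).trans hψc
        have hβ : (ψ (Quotient.mk R w)).2 = (ψ (Quotient.mk R u)).2 := by rw [hwc]
        have h2 : R2.r u v := (hR2r u v).2 (hβ.symm.trans ((hR2r v w).1 hvw).symm)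
        exact hnR ((hRiff u v).2 ⟨hR1uv, h2⟩)
  have hM'dec : IsDecomp G M' := by
    constructor
    · intro Q hQ
      rcases hmem_cases Q hQ with h | h | ⟨hQM, -⟩
      · obtain ⟨v, hv1, -, -⟩ := pairA v₀
        rw [h]
        exact ne_top_of_pair hv1
      · obtain ⟨v, hv1, -, -⟩ := pairB v₀
        rw [h]
        exact ne_top_of_pair hv1
      · exact M.2.ne_top Q hQM
    · exact hsep'
    · intro u v ha hne
      obtain ⟨K, hK, hKp⟩ := M.2.arc u v ha hne
      by_cases hKR : K = R
      · subst hKR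
        have hnR : ¬ K.r u v := par_not M.2 hK hKp hne
        rcases hfadj u v ha hne hKp with ⟨hAadj, hBeq⟩ | ⟨hAeq, hBadj⟩
        · refine ⟨R1, hmem1, ?_⟩
          intro Q hQ hQ1
          rcases hmem_cases Q hQ with h | h | ⟨hQM, hQR⟩
          · exact absurd h hQ1
          · rw [h, hR2r]
            exact hBeq
          · exact hKp Q hQM hQR
        · refine ⟨R2, hmem2, ?_⟩
          intro Q hQ hQ2
          rcases hmem_cases Q hQ with h | h | ⟨hQM, hQR⟩
          · rw [h, hR1r]
            exact hAeq
          · exact absurd h hQ2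
          · exact hKp Q hQM hQR
      · refine ⟨K, hmemo K hK hKR, ?_⟩
        intro Q hQ hQK
        rcases hmem_cases Q hQ with h | h | ⟨hQM, hQR⟩
        · rw [h]
          exact ((hRiff u v).1 (hKp R hR (fun hc => hKR hc.symm))).1
        · rw [h]
          exact ((hRiff u v).1 (hKp R hR (fun hc => hKR hc.symm))).2
        · exact hKp Q hQM hQK
    · intro Q hQ u v w ha hne hpar huw
      rcases hmem_cases Q hQ with h | h | ⟨hQM, hQR⟩
      · subst h
        exact hstepA u v w ha hne hpar huw
      · subst h
        exact hstepB u v w ha hne hpar huw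
      · have hparM : Par M.1 Q u v := by
          intro Q' hQ' hQ'Q
          by_cases hQ'R : Q' = R
          · rw [hQ'R]
            exact (hRiff u v).2 ⟨hpar R1 hmem1 (hR1nM Q hQM hQR), hpar R2 hmem2 (hR2nM Q hQM hQR)⟩
          · exact hpar Q' (hmemo Q' hQ' hQ'R) hQ'Q
        obtain ⟨x, hx1, hx2, hx3⟩ := M.2.tfwd Q hQM u v w ha hne hparM huw
        refine ⟨x, hx1, hx2, ?_⟩
        intro Q' hQ' hQ'Q
        rcases hmem_cases Q' hQ' with h | h | ⟨hQ'M, hQ'R⟩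
        · rw [h]
          exact ((hRiff w x).1 (hx3 R hR (fun hc => hQR hc.symm))).1
        · rw [h]
          exact ((hRiff w x).1 (hx3 R hR (fun hc => hQR hc.symm))).2
        · exact hx3 Q' hQ'M hQ'Q
    · intro Q hQ u v w ha hne hpar hvw
      rcases hmem_cases Q hQ with h | h | ⟨hQM, hQR⟩
      · subst h
        exact hstepA' u v w ha hne hpar hvw
      · subst h
        exact hstepB' u v w ha hne hpar hvw
      · have hparM : Par M.1 Q u v := by
          intro Q' hQ' hQ'Q
          by_cases hQ'R : Q' = R
          · rw [hQ'R]
            exact (hRiff u v).2 ⟨hpar R1 hmem1 (hR1nM Q hQM hQR), hpar R2 hmem2 (hR2nM Q hQM hQR)⟩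
          · exact hpar Q' (hmemo Q' hQ' hQ'R) hQ'Q
        obtain ⟨x, hx1, hx2, hx3⟩ := M.2.tbwd Q hQM u v w ha hne hparM hvw
        refine ⟨x, hx1, hx2, ?_⟩
        intro Q' hQ' hQ'Q
        rcases hmem_cases Q' hQ' with h | h | ⟨hQ'M, hQ'R⟩
        · rw [h]
          exact ((hRiff x w).1 (hx3 R hR (fun hc => hQR hc.symm))).1
        · rw [h]
          exact ((hRiff x w).1 (hx3 R hR (fun hc => hQR hc.symm))).2
        · exact hx3 Q' hQ'M hQ'Q
    · intro p hloop
      obtain ⟨Q, hQ, htr⟩ := M.2.loopT p hloop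
      by_cases hQR : Q = R
      · subst hQR
        have hfl : (fac G M.1 Q).Adj (Quotient.mk Q p) (Quotient.mk Q p) :=
          Or.inr ⟨rfl, p, hloop, rfl, htr⟩
        rcases ψ.map_rel_iff.2 hfl with ⟨hAl, -⟩ | ⟨-, hBl⟩
        · refine ⟨R1, hmem1, ?_⟩
          intro z hz
          have hbox2 : (GA.boxProd GB).Adj (ψ (Quotient.mk Q z)) (ψ (Quotient.mk Q z)) := by
            left
            refine ⟨?_, rfl⟩
            have h1 : (ψ (Quotient.mk Q z)).1 = (ψ (Quotient.mk Q p)).1 := ((hR1r p z).1 hz).symm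
            rw [h1]
            exact hAl
          rcases hfadj' _ _ hbox2 with ⟨p', q', hpq', hpqne', hpar', hp', hq'⟩ |
            ⟨-, p', hpl', hpc', htr'⟩
          · exfalso
            have hrpq : Q.r p' q' :=
              Q.iseqv.trans (Quotient.exact hp') (Q.iseqv.symm (Quotient.exact hq'))
            refine hpqne' (M.2.sep p' q' (fun Q' hQ' => ?_))
            by_cases hc : Q' = Q
            · rw [hc]
              exact hrpq
            · exact hpar' Q' hQ' hc
          · exact htr' z (Quotient.exact hpc')
        · refine ⟨R2, hmem2, ?_⟩
          intro z hz
          have hbox2 : (GA.boxProd GB).Adj (ψ (Quotient.mk Q z)) (ψ (Quotient.mk Q z)) := by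
            right
            refine ⟨rfl, ?_⟩
            have h1 : (ψ (Quotient.mk Q z)).2 = (ψ (Quotient.mk Q p)).2 := ((hR2r p z).1 hz).symm
            rw [h1]
            exact hBl
          rcases hfadj' _ _ hbox2 with ⟨p', q', hpq', hpqne', hpar', hp', hq'⟩ |
            ⟨-, p', hpl', hpc', htr'⟩
          · exfalso
            have hrpq : Q.r p' q' :=
              Q.iseqv.trans (Quotient.exact hp') (Q.iseqv.symm (Quotient.exact hq'))
            refine hpqne' (M.2.sep p' q' (fun Q' hQ' => ?_))
            by_cases hc : Q' = Q
            · rw [hc]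
              exact hrpq
            · exact hpar' Q' hQ' hc
          · exact htr' z (Quotient.exact hpc')
      · exact ⟨Q, hmemo Q hQ hQR, htr⟩
  have hMM' : dle G M ⟨M', hM'dec⟩ := by
    constructor
    · intro Q hQ
      by_cases hQR : Q = R
      · refine ⟨{R1, R2}, ?_, ?_⟩
        · intro T hT
          rcases Set.mem_insert_iff.1 hT with h | h
          · rw [h]
            exact hmem1
          · rw [Set.mem_singleton_iff.1 h]
            exact hmem2
        · subst hQR
          refine Setoid.ext fun a b => ?_
          constructor
          · intro h T hT
            rcases Set.mem_insert_iff.1 hT with h1 | h1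
            · rw [h1]
              exact ((hRiff a b).1 h).1
            · rw [Set.mem_singleton_iff.1 h1]
              exact ((hRiff a b).1 h).2
          · intro h
            exact (hRiff a b).2
              ⟨h R1 (Set.mem_insert _ _), h R2 (Set.mem_insert_of_mem _ rfl)⟩
      · refine ⟨{Q}, ?_, sInf_singleton.symm⟩
        intro T hT
        rw [Set.mem_singleton_iff.1 hT]
        exact hmemo Q hQ hQR
    · intro Q' hQ'
      rcases hmem_cases Q' hQ' with h | h | ⟨hQ'M, -⟩
      · refine ⟨R, hR, ?_⟩
        rw [h]
        exact Setoid.le_def.2 (fun hab => ((hRiff _ _).1 hab).1)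
      · refine ⟨R, hR, ?_⟩
        rw [h]
        exact Setoid.le_def.2 (fun hab => ((hRiff _ _).1 hab).2)
      · exact ⟨Q', hQ'M, le_refl _⟩
  have hM'M := hmax _ hMM'
  obtain ⟨S, hS, hEq⟩ := hM'M.1 R1 hmem1
  by_cases hRS : R ∈ S
  · have h1 : R1 ≤ R := by
      rw [hEq]
      exact sInf_le hRS
    have h2 : R ≤ R1 := Setoid.le_def.2 (fun hab => ((hRiff _ _).1 hab).1)
    exact hR1R (le_antisymm h1 h2)
  · obtain ⟨v, hv1, -, hv3⟩ := pairA v₀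
    have hinf : (sInf S).r v₀ v := by
      intro T hT
      exact hv3 T (hS hT) (fun hc => hRS (hc ▸ hT))
    rw [← hEq] at hinf
    exact hv1 hinf

end Split

end WeakFactor

/-- Every connected digraph (possibly infinite) with at least two vertices and an
unlooped vertex is isomorphic to a weak Cartesian product of prime digraphs. -/
theorem exists_weak_prime_factorization {V : Type u} (G : Digraph V)
    (hconn : G.Connected) (hnt : Nontrivial V) (hul : ∃ v, ¬ G.Adj v v) :
    ∃ (I : Type u) (_ : Nonempty I) (W : I → Type u) (Gs : ∀ i, Digraph (W i))
      (a : ∀ i, W i),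
      (∀ i, (Gs i).IsPrime) ∧ Nonempty (G.Iso (Digraph.weakProd Gs a)) := by
  classical
  obtain ⟨v₀, hv₀⟩ := hul
  have hbound : ∀ C : Set (WeakFactor.DecompT G), IsChain (WeakFactor.dle G) C →
      ∃ ub, ∀ D ∈ C, WeakFactor.dle G D ub := by
    intro C hch
    by_cases hCne : C.Nonempty
    · exact ⟨⟨_, WeakFactor.dlim_decomp hconn hv₀ hch hCne⟩,
        fun D hD => WeakFactor.dle_dlim hconn hch hCne hD _⟩
    · exact ⟨⟨{⊥}, WeakFactor.base_decomp hnt⟩, fun D hD => absurd ⟨D, hD⟩ hCne⟩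
  obtain ⟨M, hmax⟩ := exists_maximal_of_chains_bounded hbound
    (fun h1 h2 => WeakFactor.dle_trans h1 h2)
  have hMne : Nonempty ↥M.1 := by
    obtain ⟨a, b, hab⟩ := hnt
    obtain ⟨R, hR, -⟩ := WeakFactor.exists_coord M.2 hab
    exact ⟨⟨R, hR⟩⟩
  refine ⟨↥M.1, hMne, fun i => Quotient i.1, WeakFactor.Fs G M.1, WeakFactor.Phi M.1 v₀,
    ?_, ?_⟩
  · intro i
    exact WeakFactor.max_prime hconn hv₀ hmax i.2
  · exact WeakFactor.decomp_iso hconn M.2 v₀
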